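/- Let f ∈ K be an entire function whose order is ρ(f) = limsup_{t→∞} (log log f(t))/(log t) ∈ [0, ∞]. Then for every real p ≥ 1, limsup_{t→∞} (log(E(X_t^p)^{1/p}))/(log t) = ρ(f), the equality being an equality of limsups with values in [0, ∞]. -/

import Mathlib

open Filter Topology MeasureTheory
open scoped ENNReal NNReal Classical

noncomputable section

/-- `psum a t = ∑ aₙ tⁿ`, the value `f(t)` of the power series with coefficients `a`. -/
def psum (a : ℕ → ℝ) (t : ℝ) : ℝ := ∑' n : ℕ, a n * t ^ n

/-- The mean `m_f(t)` of the Khinchin family of the power series with coefficients `a`. -/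
def meanK (a : ℕ → ℝ) (t : ℝ) : ℝ :=
  (∑' n : ℕ, (n : ℝ) * a n * t ^ n) / ∑' n : ℕ, a n * t ^ n

/-- The variance `σ_f²(t)` of the Khinchin family. -/
def varK (a : ℕ → ℝ) (t : ℝ) : ℝ :=
  (∑' n : ℕ, (n : ℝ) ^ 2 * a n * t ^ n) / (∑' n : ℕ, a n * t ^ n) - meanK a t ^ 2

/-- The standard deviation `σ_f(t)` of the Khinchin family. -/
def sdK (a : ℕ → ℝ) (t : ℝ) : ℝ := Real.sqrt (varK a t)

/-- The moment `E(X_t^p)` of real exponent `p` of the Khinchin family. -/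
def momK (a : ℕ → ℝ) (p : ℝ) (t : ℝ) : ℝ :=
  (∑' n : ℕ, (n : ℝ) ^ p * a n * t ^ n) / ∑' n : ℕ, a n * t ^ n

/-- The filter of `t ↑ R`: `atTop` when `R = ∞`, and `𝓝[<] R` when `R < ∞`. -/
def nhdsUpto (R : ℝ≥0∞) : Filter ℝ :=
  if R = ⊤ then atTop else nhdsWithin R.toReal (Set.Iio R.toReal)


namespace S9

lemma aux_rpow_le (p : ℝ) (hp : 0 < p) {x : ℝ} (hx : 0 ≤ x) :
    x ^ p ≤ p ^ p * Real.exp x := by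
  rcases eq_or_lt_of_le hx with h | h
  · rw [← h, Real.zero_rpow hp.ne']
    positivity
  · rw [Real.rpow_def_of_pos h, Real.rpow_def_of_pos hp, ← Real.exp_add]
    apply Real.exp_le_exp.2
    have h1 : Real.log (x / p) ≤ x / p - 1 := Real.log_le_sub_one_of_pos (by positivity)
    rw [Real.log_div h.ne' hp.ne'] at h1
    have h2 := mul_le_mul_of_nonneg_left h1 hp.le
    have hxp : p * (x / p) = x := by field_simp
    nlinarith

lemma aux_split (p : ℝ) (hp : 0 < p) {N : ℝ} (hN : 0 ≤ N) (n : ℕ) :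
    (n : ℝ) ^ p ≤ N ^ p + p ^ p * Real.exp (-N) * Real.exp (2 * n) := by
  have hpp : 0 < p ^ p := Real.rpow_pos_of_pos hp p
  rcases le_or_gt (n : ℝ) N with h | h
  · have h1 : (n : ℝ) ^ p ≤ N ^ p := Real.rpow_le_rpow n.cast_nonneg h hp.le
    have h2 : 0 < p ^ p * Real.exp (-N) * Real.exp (2 * n) := by positivity
    linarith
  · have h1 : (n : ℝ) ^ p ≤ p ^ p * Real.exp n := aux_rpow_le p hp n.cast_nonneg
    have h2 : Real.exp (n : ℝ) = Real.exp (-(n : ℝ)) * Real.exp (2 * n) := by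
      rw [← Real.exp_add]; ring_nf
    have h3 : Real.exp (-(n : ℝ)) ≤ Real.exp (-N) := Real.exp_le_exp.2 (by linarith)
    have h4 := mul_le_mul_of_nonneg_left h3 (by positivity : (0:ℝ) ≤ p ^ p * Real.exp (2 * n))
    have h5 : 0 ≤ N ^ p := Real.rpow_nonneg hN p
    nlinarith

variable {a : ℕ → ℝ}

lemma summable_weight (hpos : ∀ n, 0 ≤ a n)
    (hconv : ∀ t : ℝ, Summable fun n : ℕ => a n * t ^ n)
    (p : ℝ) (hp : 0 < p) {t : ℝ} (ht : 0 ≤ t) :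
    Summable fun n : ℕ => (n : ℝ) ^ p * a n * t ^ n := by
  refine Summable.of_nonneg_of_le (fun n => by have := hpos n; positivity) ?_
    (((hconv (Real.exp 1 * t))).mul_left (p ^ p))
  intro n
  have h1 : (n : ℝ) ^ p ≤ p ^ p * Real.exp n := aux_rpow_le p hp n.cast_nonneg
  have h2 : (Real.exp 1 * t) ^ n = Real.exp n * t ^ n := by
    rw [mul_pow, ← Real.exp_nat_mul, mul_one]
  have h3 : 0 ≤ a n * t ^ n := by have := hpos n; positivity
  calc (n : ℝ) ^ p * a n * t ^ n = (n : ℝ) ^ p * (a n * t ^ n) := by ring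
    _ ≤ (p ^ p * Real.exp n) * (a n * t ^ n) := mul_le_mul_of_nonneg_right h1 h3
    _ = p ^ p * (a n * (Real.exp 1 * t) ^ n) := by rw [h2]; ring

lemma summable_lin (hpos : ∀ n, 0 ≤ a n)
    (hconv : ∀ t : ℝ, Summable fun n : ℕ => a n * t ^ n)
    {t : ℝ} (ht : 0 ≤ t) :
    Summable fun n : ℕ => (n : ℝ) * a n * t ^ n := by
  have := summable_weight hpos hconv 1 one_pos ht
  simpa [Real.rpow_one] using this

lemma a0_le_psum (hpos : ∀ n, 0 ≤ a n)
    (hconv : ∀ t : ℝ, Summable fun n : ℕ => a n * t ^ n)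
    {t : ℝ} (ht : 0 ≤ t) : a 0 ≤ psum a t := by
  have h := Summable.le_tsum (hconv t) 0 fun n _ => by have := hpos n; positivity
  simpa [psum] using h

lemma psum_pos (hpos : ∀ n, 0 ≤ a n) (ha0 : 0 < a 0)
    (hconv : ∀ t : ℝ, Summable fun n : ℕ => a n * t ^ n)
    {t : ℝ} (ht : 0 ≤ t) : 0 < psum a t :=
  lt_of_lt_of_le ha0 (a0_le_psum hpos hconv ht)

lemma psum_tendsto (hpos : ∀ n, 0 ≤ a n) (ha1 : ∃ n, 1 ≤ n ∧ 0 < a n)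
    (hconv : ∀ t : ℝ, Summable fun n : ℕ => a n * t ^ n) :
    Tendsto (fun t => psum a t) atTop atTop := by
  obtain ⟨n₀, hn₀, han₀⟩ := ha1
  apply tendsto_atTop_mono' atTop _
    (Filter.Tendsto.const_mul_atTop han₀ (tendsto_pow_atTop (n := n₀) (by omega)))
  filter_upwards [eventually_ge_atTop (0 : ℝ)] with t ht
  have h := Summable.le_tsum (hconv t) n₀ fun n _ => by have := hpos n; positivity
  simpa [psum] using h

lemma meanK_pos (hpos : ∀ n, 0 ≤ a n) (ha0 : 0 < a 0) (ha1 : ∃ n, 1 ≤ n ∧ 0 < a n)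
    (hconv : ∀ t : ℝ, Summable fun n : ℕ => a n * t ^ n)
    {t : ℝ} (ht : 0 < t) : 0 < meanK a t := by
  obtain ⟨n₀, hn₀, han₀⟩ := ha1
  have hS0 : 0 < psum a t := psum_pos hpos ha0 hconv ht.le
  have hS1 : 0 < ∑' n : ℕ, (n : ℝ) * a n * t ^ n := by
    refine Summable.tsum_pos (summable_lin hpos hconv ht.le)
      (fun n => by have := hpos n; positivity) n₀ ?_
    have hn : (0:ℝ) < (n₀ : ℝ) := by exact_mod_cast hn₀
    positivity
  exact div_pos hS1 (by simpa [psum] using hS0)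

lemma S1_eq (hpos : ∀ n, 0 ≤ a n) (ha0 : 0 < a 0)
    (hconv : ∀ t : ℝ, Summable fun n : ℕ => a n * t ^ n)
    {t : ℝ} (ht : 0 < t) :
    ∑' n : ℕ, (n : ℝ) * a n * t ^ n = meanK a t * psum a t := by
  have hS0 : 0 < psum a t := psum_pos hpos ha0 hconv ht.le
  rw [meanK]
  rw [show (∑' n : ℕ, a n * t ^ n) = psum a t from rfl]
  rw [div_mul_cancel₀ _ hS0.ne']

lemma momK_pos (hpos : ∀ n, 0 ≤ a n) (ha0 : 0 < a 0) (ha1 : ∃ n, 1 ≤ n ∧ 0 < a n)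
    (hconv : ∀ t : ℝ, Summable fun n : ℕ => a n * t ^ n)
    {p t : ℝ} (hp : 0 < p) (ht : 0 < t) : 0 < momK a p t := by
  obtain ⟨n₀, hn₀, han₀⟩ := ha1
  have hS0 : 0 < psum a t := psum_pos hpos ha0 hconv ht.le
  have hSp : 0 < ∑' n : ℕ, (n : ℝ) ^ p * a n * t ^ n := by
    refine Summable.tsum_pos (summable_weight hpos hconv p hp ht.le)
      (fun n => by have := hpos n; positivity) n₀ ?_
    have hn : (0:ℝ) < (n₀ : ℝ) := by exact_mod_cast hn₀
    have : (0:ℝ) < (n₀ : ℝ) ^ p := Real.rpow_pos_of_pos hn p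
    positivity
  exact div_pos hSp (by simpa [psum] using hS0)

lemma log_psum_le (hpos : ∀ n, 0 ≤ a n) (ha0 : 0 < a 0)
    (hconv : ∀ t : ℝ, Summable fun n : ℕ => a n * t ^ n)
    {t : ℝ} (ht : 1 < t) :
    Real.log (psum a t) ≤ Real.log (psum a 1) + meanK a t * Real.log t := by
  have ht0 : (0:ℝ) < t := by linarith
  set L := Real.log t with hLdef
  have hL : 0 < L := Real.log_pos ht
  have hS0 : 0 < psum a t := psum_pos hpos ha0 hconv ht0.le
  set m := meanK a t with hmdef
  have hS1 : ∑' n : ℕ, (n : ℝ) * a n * t ^ n = m * psum a t := S1_eq hpos ha0 hconv ht0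
  have hsum1 : Summable fun n : ℕ => a n * t ^ n := hconv t
  have hsum2 : Summable fun n : ℕ => (n : ℝ) * a n * t ^ n := summable_lin hpos hconv ht0.le
  have key : ∀ n : ℕ,
      Real.exp (-(m * L)) * ((1 + m * L) * (a n * t ^ n) - L * ((n : ℝ) * a n * t ^ n))
        ≤ a n * 1 ^ n := by
    intro n
    have h1 : 1 + (m - (n : ℝ)) * L ≤ Real.exp ((m - (n : ℝ)) * L) := by
      have := Real.add_one_le_exp ((m - (n : ℝ)) * L); linarith
    have h2 : Real.exp (-(m * L)) * Real.exp ((m - (n : ℝ)) * L) = Real.exp (-(n : ℝ) * L) := by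
      rw [← Real.exp_add]; ring_nf
    have h3 : Real.exp (-(n : ℝ) * L) * (a n * t ^ n) = a n * 1 ^ n := by
      have he : Real.exp (-(n : ℝ) * L) = (t⁻¹) ^ n := by
        rw [show -(n : ℝ) * L = (n : ℝ) * (-L) by ring, Real.exp_nat_mul,
          Real.exp_neg, hLdef, Real.exp_log ht0]
      rw [he, one_pow, mul_one]
      calc t⁻¹ ^ n * (a n * t ^ n) = a n * (t * t⁻¹) ^ n := by rw [mul_pow]; ring
        _ = a n := by rw [mul_inv_cancel₀ ht0.ne', one_pow, mul_one]
    have h4 : 0 ≤ a n * t ^ n := by have := hpos n; positivity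
    have h5 : Real.exp (-(m * L)) * (1 + (m - (n : ℝ)) * L) ≤ Real.exp (-(n : ℝ) * L) := by
      calc Real.exp (-(m * L)) * (1 + (m - (n : ℝ)) * L)
          ≤ Real.exp (-(m * L)) * Real.exp ((m - (n : ℝ)) * L) :=
            mul_le_mul_of_nonneg_left h1 (Real.exp_pos _).le
        _ = _ := h2
    have h6 := mul_le_mul_of_nonneg_right h5 h4
    calc Real.exp (-(m * L)) * ((1 + m * L) * (a n * t ^ n) - L * ((n : ℝ) * a n * t ^ n))
        = Real.exp (-(m * L)) * (1 + (m - (n : ℝ)) * L) * (a n * t ^ n) := by ring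
      _ ≤ Real.exp (-(n : ℝ) * L) * (a n * t ^ n) := h6
      _ = a n * 1 ^ n := h3
  have hsumL : Summable fun n : ℕ =>
      Real.exp (-(m * L)) * ((1 + m * L) * (a n * t ^ n) - L * ((n : ℝ) * a n * t ^ n)) :=
    ((hsum1.mul_left _).sub (hsum2.mul_left _)).mul_left _
  have hle := Summable.tsum_le_tsum key hsumL (by simpa using hconv 1)
  have htsum : (∑' n : ℕ,
      Real.exp (-(m * L)) * ((1 + m * L) * (a n * t ^ n) - L * ((n : ℝ) * a n * t ^ n)))
      = Real.exp (-(m * L)) * psum a t := by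
    rw [tsum_mul_left, Summable.tsum_sub (hsum1.mul_left _) (hsum2.mul_left _),
      tsum_mul_left, tsum_mul_left, hS1]
    rw [show (∑' n : ℕ, a n * t ^ n) = psum a t from rfl]
    ring
  rw [htsum] at hle
  have hps1 : (∑' n : ℕ, a n * 1 ^ n) = psum a 1 := rfl
  rw [hps1] at hle
  have h8 : Real.log (Real.exp (-(m * L)) * psum a t) ≤ Real.log (psum a 1) :=
    Real.log_le_log (by positivity) hle
  rw [Real.log_mul (Real.exp_pos _).ne' hS0.ne', Real.log_exp] at h8
  linarith

lemma mean_le_mom (hpos : ∀ n, 0 ≤ a n) (ha0 : 0 < a 0) (ha1 : ∃ n, 1 ≤ n ∧ 0 < a n)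
    (hconv : ∀ t : ℝ, Summable fun n : ℕ => a n * t ^ n)
    {p t : ℝ} (hp : 1 ≤ p) (ht : 0 < t) :
    meanK a t ≤ momK a p t ^ (1 / p) := by
  have hp0 : 0 < p := lt_of_lt_of_le one_pos hp
  have hS0 : 0 < psum a t := psum_pos hpos ha0 hconv ht.le
  have hsum1 : Summable fun n : ℕ => a n * t ^ n := hconv t
  have hsum2 : Summable fun n : ℕ => (n : ℝ) * a n * t ^ n := summable_lin hpos hconv ht.le
  have hsump : Summable fun n : ℕ => (n : ℝ) ^ p * a n * t ^ n :=
    summable_weight hpos hconv p hp0 ht.le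
  have hm : 0 < meanK a t := meanK_pos hpos ha0 ha1 hconv ht
  set m := meanK a t with hmdef
  have hS1 : ∑' n : ℕ, (n : ℝ) * a n * t ^ n = m * psum a t := S1_eq hpos ha0 hconv ht
  have hmp : 0 < m ^ p := Real.rpow_pos_of_pos hm p
  have key : ∀ n : ℕ,
      (m ^ p * (1 - p)) * (a n * t ^ n) + (p * m ^ p / m) * ((n : ℝ) * a n * t ^ n)
        ≤ (n : ℝ) ^ p * a n * t ^ n := by
    intro n
    have hs : (-1 : ℝ) ≤ (n : ℝ) / m - 1 := by
      have : (0:ℝ) ≤ (n : ℝ) / m := div_nonneg n.cast_nonneg hm.le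
      linarith
    have hb := one_add_mul_self_le_rpow_one_add hs hp
    have h1 : (1 : ℝ) + ((n : ℝ) / m - 1) = (n : ℝ) / m := by ring
    rw [h1, Real.div_rpow n.cast_nonneg hm.le] at hb
    have h3 : m ^ p * (1 + p * ((n : ℝ) / m - 1)) ≤ (n : ℝ) ^ p := by
      have h := mul_le_mul_of_nonneg_left hb hmp.le
      rwa [mul_div_cancel₀ _ hmp.ne'] at h
    have h4 : m ^ p * (1 - p) + (p * m ^ p / m) * (n : ℝ) ≤ (n : ℝ) ^ p := by
      have hexp : m ^ p * (1 + p * ((n : ℝ) / m - 1))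
          = m ^ p * (1 - p) + (p * m ^ p / m) * (n : ℝ) := by
        field_simp
        ring
      linarith [hexp ▸ h3]
    have h5 : 0 ≤ a n * t ^ n := by have := hpos n; positivity
    calc (m ^ p * (1 - p)) * (a n * t ^ n) + (p * m ^ p / m) * ((n : ℝ) * a n * t ^ n)
        = (m ^ p * (1 - p) + (p * m ^ p / m) * (n : ℝ)) * (a n * t ^ n) := by ring
      _ ≤ (n : ℝ) ^ p * (a n * t ^ n) := mul_le_mul_of_nonneg_right h4 h5
      _ = (n : ℝ) ^ p * a n * t ^ n := by ring
  have hle := Summable.tsum_le_tsum key ((hsum1.mul_left _).add (hsum2.mul_left _)) hsump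
  rw [Summable.tsum_add (hsum1.mul_left _) (hsum2.mul_left _), tsum_mul_left, tsum_mul_left, hS1,
    show (∑' n : ℕ, a n * t ^ n) = psum a t from rfl] at hle
  have hle2 : m ^ p * psum a t ≤ ∑' n : ℕ, (n : ℝ) ^ p * a n * t ^ n := by
    have : m ^ p * (1 - p) * psum a t + p * m ^ p / m * (m * psum a t)
        = m ^ p * psum a t := by
      field_simp
      ring
    linarith [this ▸ hle]
  have hmom : m ^ p ≤ momK a p t := by
    rw [momK, show (∑' n : ℕ, a n * t ^ n) = psum a t from rfl, le_div_iff₀ hS0]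
    exact hle2
  have := Real.rpow_le_rpow hmp.le hmom (by positivity : (0:ℝ) ≤ 1 / p)
  rwa [← Real.rpow_mul hm.le, mul_one_div_cancel hp0.ne', Real.rpow_one] at this

lemma sp_le (hpos : ∀ n, 0 ≤ a n)
    (hconv : ∀ t : ℝ, Summable fun n : ℕ => a n * t ^ n)
    {p t N : ℝ} (hp : 1 ≤ p) (ht : 0 ≤ t) (hN : 0 ≤ N) :
    (∑' n : ℕ, (n : ℝ) ^ p * a n * t ^ n)
      ≤ N ^ p * psum a t + (p ^ p * Real.exp (-N)) * psum a (Real.exp 2 * t) := by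
  have hp0 : 0 < p := lt_of_lt_of_le one_pos hp
  have key : ∀ n : ℕ, (n : ℝ) ^ p * a n * t ^ n
      ≤ N ^ p * (a n * t ^ n) + (p ^ p * Real.exp (-N)) * (a n * (Real.exp 2 * t) ^ n) := by
    intro n
    have h1 := aux_split p hp0 hN n
    have h2 : (Real.exp 2 * t) ^ n = Real.exp (2 * (n : ℝ)) * t ^ n := by
      rw [mul_pow, ← Real.exp_nat_mul, mul_comm (n : ℝ) 2]
    have h3 : 0 ≤ a n * t ^ n := by have := hpos n; positivity
    calc (n : ℝ) ^ p * a n * t ^ n = (n : ℝ) ^ p * (a n * t ^ n) := by ring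
      _ ≤ (N ^ p + p ^ p * Real.exp (-N) * Real.exp (2 * (n : ℝ))) * (a n * t ^ n) :=
          mul_le_mul_of_nonneg_right h1 h3
      _ = N ^ p * (a n * t ^ n)
          + (p ^ p * Real.exp (-N)) * (Real.exp (2 * (n : ℝ)) * t ^ n * a n) := by ring
      _ = N ^ p * (a n * t ^ n) + (p ^ p * Real.exp (-N)) * (a n * (Real.exp 2 * t) ^ n) := by
          rw [h2]; ring
  have hsL := summable_weight hpos hconv p hp0 ht
  have hle := Summable.tsum_le_tsum key hsL (((hconv t).mul_left _).add ((hconv _).mul_left _))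
  rwa [Summable.tsum_add ((hconv t).mul_left _) ((hconv _).mul_left _), tsum_mul_left, tsum_mul_left,
    show (∑' n : ℕ, a n * t ^ n) = psum a t from rfl,
    show (∑' n : ℕ, a n * (Real.exp 2 * t) ^ n) = psum a (Real.exp 2 * t) from rfl] at hle

lemma psum_sub_le (hpos : ∀ n, 0 ≤ a n)
    (hconv : ∀ t : ℝ, Summable fun n : ℕ => a n * t ^ n)
    {t : ℝ} (ht : 0 ≤ t) :
    psum a t - a 0 ≤ ∑' n : ℕ, (n : ℝ) * a n * t ^ n := by
  have hite : Summable (fun n : ℕ => if n = 0 then a 0 else 0) :=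
    (hasSum_ite_eq 0 (a 0)).summable
  have key : ∀ n : ℕ, a n * t ^ n - (if n = 0 then a 0 else 0) ≤ (n : ℝ) * a n * t ^ n := by
    intro n
    cases n with
    | zero => simp
    | succ k =>
      simp only [if_neg (Nat.succ_ne_zero k)]
      have h1 : (1:ℝ) ≤ ((k + 1 : ℕ) : ℝ) := by exact_mod_cast Nat.succ_le_succ (Nat.zero_le k)
      have h2 : 0 ≤ a (k + 1) * t ^ (k + 1) := by have := hpos (k + 1); positivity
      nlinarith
  have h := Summable.tsum_le_tsum key ((hconv t).sub hite) (summable_lin hpos hconv ht)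
  rwa [Summable.tsum_sub (hconv t) hite, (hasSum_ite_eq 0 (a 0)).tsum_eq,
    show (∑' n : ℕ, a n * t ^ n) = psum a t from rfl] at h

end S9

set_option maxHeartbeats 2000000 in
/-- Theorem 2.5.1. For `f ∈ K` entire of order
`ρ(f) = limsup_{t→∞} log log f(t) / log t ∈ [0,∞]` and every real `p ≥ 1`,
`limsup_{t→∞} log(E(X_t^p)^{1/p}) / log t = ρ(f)` (limsups taken in `EReal`). -/
theorem statement9 (a : ℕ → ℝ)
    (hpos : ∀ n, 0 ≤ a n) (ha0 : 0 < a 0) (ha1 : ∃ n, 1 ≤ n ∧ 0 < a n)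
    (hconv : ∀ t : ℝ, Summable fun n : ℕ => a n * t ^ n) :
    ∀ p : ℝ, 1 ≤ p →
      Filter.limsup
          (fun t : ℝ => ((Real.log (momK a p t ^ (1 / p)) / Real.log t : ℝ) : EReal)) atTop =
        Filter.limsup
          (fun t : ℝ => ((Real.log (Real.log (psum a t)) / Real.log t : ℝ) : EReal)) atTop := by
  intro p hp
  have hp0 : 0 < p := lt_of_lt_of_le one_pos hp
  have hFt : Tendsto (fun t => psum a t) atTop atTop := S9.psum_tendsto hpos ha1 hconv
  have hbdd : ∀ u : ℝ → EReal, Filter.IsBoundedUnder (· ≤ ·) atTop u :=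
    fun u => isBoundedUnder_of ⟨⊤, fun x => le_top⟩
  -- nonnegativity of the two limsups
  have hρ0 : (0 : EReal) ≤ Filter.limsup
      (fun t : ℝ => ((Real.log (Real.log (psum a t)) / Real.log t : ℝ) : EReal)) atTop := by
    apply le_limsup_of_frequently_le _ (hbdd _)
    apply Filter.Eventually.frequently
    filter_upwards [eventually_gt_atTop (1:ℝ), hFt.eventually_ge_atTop (Real.exp 1)]
      with t ht1 hte
    have hlt : 0 < Real.log t := Real.log_pos ht1
    have h1 : (1:ℝ) ≤ Real.log (psum a t) := by
      have := Real.log_le_log (Real.exp_pos 1) hte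
      rwa [Real.log_exp] at this
    have h2 : (0:ℝ) ≤ Real.log (Real.log (psum a t)) / Real.log t :=
      div_nonneg (Real.log_nonneg h1) hlt.le
    exact_mod_cast h2
  have hμ0 : (0 : EReal) ≤ Filter.limsup
      (fun t : ℝ => ((Real.log (momK a p t ^ (1 / p)) / Real.log t : ℝ) : EReal)) atTop := by
    have hbound : ∀ᶠ t : ℝ in atTop,
        ((-Real.log 2 / Real.log t : ℝ) : EReal)
          ≤ ((Real.log (momK a p t ^ (1 / p)) / Real.log t : ℝ) : EReal) := by
      filter_upwards [eventually_gt_atTop (1:ℝ), hFt.eventually_ge_atTop (2 * a 0)]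
        with t ht1 hta
      have ht0 : (0:ℝ) < t := by linarith
      have hlt : 0 < Real.log t := Real.log_pos ht1
      have hS0 : 0 < psum a t := S9.psum_pos hpos ha0 hconv ht0.le
      have hm : (1:ℝ)/2 ≤ meanK a t := by
        have h1 : psum a t - a 0 ≤ ∑' n : ℕ, (n:ℝ) * a n * t ^ n :=
          S9.psum_sub_le hpos hconv ht0.le
        rw [meanK, show (∑' n : ℕ, a n * t ^ n) = psum a t from rfl, le_div_iff₀ hS0]
        linarith
      have h3 : (1:ℝ)/2 ≤ momK a p t ^ (1/p) :=
        hm.trans (S9.mean_le_mom hpos ha0 ha1 hconv hp ht0)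
      have h4 : Real.log ((1:ℝ)/2) ≤ Real.log (momK a p t ^ (1/p)) :=
        Real.log_le_log (by norm_num) h3
      have h5 : Real.log ((1:ℝ)/2) = -Real.log 2 := by rw [one_div, Real.log_inv]
      have h6 : -Real.log 2 / Real.log t ≤ Real.log (momK a p t ^ (1/p)) / Real.log t :=
        (div_le_div_iff_of_pos_right hlt).2 (by rw [← h5]; exact h4)
      exact_mod_cast h6
    have hlim : Tendsto (fun t : ℝ => ((-Real.log 2 / Real.log t : ℝ) : EReal))
        atTop (𝓝 (0:EReal)) := by
      rw [show ((0:EReal)) = ((0:ℝ):EReal) by simp, EReal.tendsto_coe]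
      exact Tendsto.div_atTop tendsto_const_nhds Real.tendsto_log_atTop
    calc (0:EReal)
        = Filter.limsup (fun t : ℝ => ((-Real.log 2 / Real.log t : ℝ) : EReal)) atTop :=
          (hlim.limsup_eq).symm
      _ ≤ _ := limsup_le_limsup hbound
  -- direction B : moment limsup ≤ order
  have hB : Filter.limsup
      (fun t : ℝ => ((Real.log (momK a p t ^ (1 / p)) / Real.log t : ℝ) : EReal)) atTop
      ≤ Filter.limsup
      (fun t : ℝ => ((Real.log (Real.log (psum a t)) / Real.log t : ℝ) : EReal)) atTop := by
    rw [← EReal.le_of_forall_lt_iff_le]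
    intro c hc
    have hρtop : Filter.limsup
        (fun t : ℝ => ((Real.log (Real.log (psum a t)) / Real.log t : ℝ) : EReal)) atTop ≠ ⊤ :=
      ne_top_of_lt hc
    have hρbot : Filter.limsup
        (fun t : ℝ => ((Real.log (Real.log (psum a t)) / Real.log t : ℝ) : EReal)) atTop ≠ ⊥ :=
      (lt_of_lt_of_le (by simpa using EReal.bot_lt_coe 0) hρ0).ne'
    have hcoe := EReal.coe_toReal hρtop hρbot
    set r := (Filter.limsup
      (fun t : ℝ => ((Real.log (Real.log (psum a t)) / Real.log t : ℝ) : EReal)) atTop).toReal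
      with hrdef
    have hrc : r < c := by
      rw [← hcoe] at hc; exact_mod_cast hc
    have hr0 : (0:ℝ) ≤ r := by
      rw [← hcoe] at hρ0; exact_mod_cast hρ0
    set d := (r + c)/2 with hd
    have hd0 : 0 < d := by rw [hd]; linarith
    have hdc : d < c := by rw [hd]; linarith
    have hρd : Filter.limsup
        (fun t : ℝ => ((Real.log (Real.log (psum a t)) / Real.log t : ℝ) : EReal)) atTop
        < (d : EReal) := by
      rw [← hcoe]; exact_mod_cast (by rw [hd]; linarith : r < d)
    have hevF := eventually_lt_of_limsup_lt hρd (hbdd _)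
    have hmap : Tendsto (fun t : ℝ => Real.exp 2 * t) atTop atTop :=
      Filter.Tendsto.const_mul_atTop (Real.exp_pos 2) tendsto_id
    have hg : Tendsto (fun t : ℝ => (Real.log 2 / p + 2 * d) / Real.log t + d)
        atTop (𝓝 (0 + d)) :=
      Tendsto.add (Tendsto.div_atTop tendsto_const_nhds Real.tendsto_log_atTop)
        tendsto_const_nhds
    rw [zero_add] at hg
    have hgc := hg.eventually_lt_const hdc
    apply limsup_le_of_le (by isBoundedDefault)
    filter_upwards [eventually_gt_atTop (1:ℝ),
      hmap.eventually (hFt.eventually_ge_atTop (Real.exp 1)),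
      hmap.eventually (hFt.eventually_ge_atTop (Real.exp ((p ^ p / a 0) ^ (1/p)))),
      hmap.eventually hevF, hgc] with t ht1 he1 he2 hef hgct
    have ht0 : (0:ℝ) < t := by linarith
    have hlt : 0 < Real.log t := Real.log_pos ht1
    set s := Real.exp 2 * t with hs
    have hs0 : (0:ℝ) < s := by rw [hs]; positivity
    have hS0t : 0 < psum a t := S9.psum_pos hpos ha0 hconv ht0.le
    have hS0s : 0 < psum a s := S9.psum_pos hpos ha0 hconv hs0.le
    set N := Real.log (psum a s) with hN
    have hN1 : (1:ℝ) ≤ N := by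
      have := Real.log_le_log (Real.exp_pos 1) he1
      rwa [Real.log_exp] at this
    have hN0 : (0:ℝ) < N := by linarith
    have hNp : p ^ p / a 0 ≤ N ^ p := by
      have h1 : (p ^ p / a 0) ^ (1/p) ≤ N := by
        have := Real.log_le_log (Real.exp_pos _) he2
        rwa [Real.log_exp] at this
      have h2 := Real.rpow_le_rpow (Real.rpow_nonneg (by positivity) _) h1 hp0.le
      rwa [← Real.rpow_mul (by positivity), one_div_mul_cancel hp0.ne', Real.rpow_one] at h2
    have hsplit := S9.sp_le hpos hconv hp ht0.le (by linarith : (0:ℝ) ≤ N)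
    have hexp : Real.exp (-N) = (psum a s)⁻¹ := by rw [hN, Real.exp_neg, Real.exp_log hS0s]
    have hconst : (p ^ p * Real.exp (-N)) * psum a s = p ^ p := by
      rw [hexp]; field_simp
    rw [hconst] at hsplit
    have hmom1 : momK a p t ≤ N ^ p + p ^ p / a 0 := by
      rw [momK, show (∑' n : ℕ, a n * t ^ n) = psum a t from rfl, div_le_iff₀ hS0t]
      have ha0t : a 0 ≤ psum a t := S9.a0_le_psum hpos hconv ht0.le
      have hpp0 : (0:ℝ) ≤ p ^ p := by positivity
      have h2 : p ^ p ≤ p ^ p / a 0 * psum a t := by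
        rw [div_mul_eq_mul_div, le_div_iff₀ ha0]
        nlinarith
      nlinarith [hsplit]
    have hEpos : 0 < momK a p t := S9.momK_pos hpos ha0 ha1 hconv hp0 ht0
    have hmom2 : momK a p t ≤ 2 * N ^ p := by linarith
    have hlog1 : Real.log (momK a p t) ≤ Real.log 2 + p * Real.log N := by
      have := Real.log_le_log hEpos hmom2
      rwa [Real.log_mul two_ne_zero (Real.rpow_pos_of_pos hN0 p).ne', Real.log_rpow hN0] at this
    have hlog2 : Real.log (momK a p t ^ (1/p)) ≤ Real.log 2 / p + Real.log N := by
      rw [Real.log_rpow hEpos]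
      calc (1/p) * Real.log (momK a p t) ≤ (1/p) * (Real.log 2 + p * Real.log N) :=
            mul_le_mul_of_nonneg_left hlog1 (by positivity)
        _ = Real.log 2 / p + Real.log N := by field_simp
    have hlogs : Real.log s = 2 + Real.log t := by
      rw [hs, Real.log_mul (Real.exp_pos 2).ne' ht0.ne', Real.log_exp]
    have hlts : 0 < Real.log s := by rw [hlogs]; linarith
    have hvf : Real.log (Real.log (psum a s)) / Real.log s < d := by exact_mod_cast hef
    have hlogN : Real.log N < d * (2 + Real.log t) := by
      rw [hN, ← hlogs]
      have := (div_lt_iff₀ hlts).1 hvf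
      linarith
    have hfinal : Real.log (momK a p t ^ (1/p)) / Real.log t
        ≤ (Real.log 2 / p + 2 * d) / Real.log t + d := by
      have h1 : Real.log (momK a p t ^ (1/p)) ≤ (Real.log 2 / p + 2 * d) + d * Real.log t := by
        nlinarith [hlog2, hlogN]
      calc Real.log (momK a p t ^ (1/p)) / Real.log t
          ≤ ((Real.log 2 / p + 2 * d) + d * Real.log t) / Real.log t :=
            (div_le_div_iff_of_pos_right hlt).2 h1
        _ = (Real.log 2 / p + 2 * d) / Real.log t + d * Real.log t / Real.log t := add_div _ _ _
        _ = (Real.log 2 / p + 2 * d) / Real.log t + d := by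
            rw [mul_div_assoc, div_self hlt.ne', mul_one]
    have hfin2 : Real.log (momK a p t ^ (1/p)) / Real.log t ≤ c := (lt_of_le_of_lt hfinal hgct).le
    exact_mod_cast hfin2
  -- direction A : order ≤ moment limsup
  have hA : Filter.limsup
      (fun t : ℝ => ((Real.log (Real.log (psum a t)) / Real.log t : ℝ) : EReal)) atTop
      ≤ Filter.limsup
      (fun t : ℝ => ((Real.log (momK a p t ^ (1 / p)) / Real.log t : ℝ) : EReal)) atTop := by
    rw [← EReal.le_of_forall_lt_iff_le]
    intro c hc
    have hμtop : Filter.limsup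
        (fun t : ℝ => ((Real.log (momK a p t ^ (1 / p)) / Real.log t : ℝ) : EReal)) atTop ≠ ⊤ :=
      ne_top_of_lt hc
    have hμbot : Filter.limsup
        (fun t : ℝ => ((Real.log (momK a p t ^ (1 / p)) / Real.log t : ℝ) : EReal)) atTop ≠ ⊥ :=
      (lt_of_lt_of_le (by simpa using EReal.bot_lt_coe 0) hμ0).ne'
    have hcoe := EReal.coe_toReal hμtop hμbot
    set r := (Filter.limsup
      (fun t : ℝ => ((Real.log (momK a p t ^ (1 / p)) / Real.log t : ℝ) : EReal)) atTop).toReal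
      with hrdef
    have hrc : r < c := by
      rw [← hcoe] at hc; exact_mod_cast hc
    have hr0 : (0:ℝ) ≤ r := by
      rw [← hcoe] at hμ0; exact_mod_cast hμ0
    set d := (r + c)/2 with hd
    have hd0 : 0 < d := by rw [hd]; linarith
    have hdc : d < c := by rw [hd]; linarith
    have hμd : Filter.limsup
        (fun t : ℝ => ((Real.log (momK a p t ^ (1 / p)) / Real.log t : ℝ) : EReal)) atTop
        < (d : EReal) := by
      rw [← hcoe]; exact_mod_cast (by rw [hd]; linarith : r < d)
    have hevE := eventually_lt_of_limsup_lt hμd (hbdd _)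
    have hbig : Tendsto (fun t : ℝ => Real.exp (d * Real.log t) * Real.log t) atTop atTop := by
      apply Tendsto.atTop_mul_atTop₀ _ Real.tendsto_log_atTop
      exact Real.tendsto_exp_atTop.comp
        (Filter.Tendsto.const_mul_atTop hd0 Real.tendsto_log_atTop)
    have hg : Tendsto (fun t : ℝ => (Real.log 2 + Real.log (Real.log t)) / Real.log t + d)
        atTop (𝓝 (0 + d)) := by
      apply Tendsto.add _ tendsto_const_nhds
      have houter : Tendsto (fun u : ℝ => (Real.log 2 + Real.log u) / u) atTop (𝓝 0) := by
        have h1 : Tendsto (fun u : ℝ => Real.log 2 / u + Real.log u / u) atTop (𝓝 (0 + 0)) :=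
          (Tendsto.div_atTop tendsto_const_nhds tendsto_id).add
            Real.isLittleO_log_id_atTop.tendsto_div_nhds_zero
        rw [add_zero] at h1
        exact h1.congr fun u => by rw [← add_div]
      exact houter.comp Real.tendsto_log_atTop
    rw [zero_add] at hg
    have hgc := hg.eventually_lt_const hdc
    apply limsup_le_of_le (by isBoundedDefault)
    filter_upwards [eventually_gt_atTop (1:ℝ), hFt.eventually_ge_atTop (Real.exp 1),
      hevE, hbig.eventually_ge_atTop (Real.log (psum a 1)), hgc] with t ht1 hte hue hbt hgct
    have ht0 : (0:ℝ) < t := by linarith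
    have hlt : 0 < Real.log t := Real.log_pos ht1
    have hEpos : 0 < momK a p t := S9.momK_pos hpos ha0 ha1 hconv hp0 ht0
    have hEppos : 0 < momK a p t ^ (1/p) := Real.rpow_pos_of_pos hEpos _
    have hue' : Real.log (momK a p t ^ (1/p)) / Real.log t < d := by exact_mod_cast hue
    have h1 : Real.log (momK a p t ^ (1/p)) < d * Real.log t := by
      have := (div_lt_iff₀ hlt).1 hue'
      linarith
    have h2 : momK a p t ^ (1/p) < Real.exp (d * Real.log t) := by
      rw [← Real.exp_log hEppos]
      exact Real.exp_lt_exp.2 h1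
    have h3 : meanK a t ≤ momK a p t ^ (1/p) := S9.mean_le_mom hpos ha0 ha1 hconv hp ht0
    have h4 : Real.log (psum a t) ≤ Real.log (psum a 1) + meanK a t * Real.log t :=
      S9.log_psum_le hpos ha0 hconv ht1
    have h5 : meanK a t * Real.log t ≤ Real.exp (d * Real.log t) * Real.log t :=
      mul_le_mul_of_nonneg_right (h3.trans h2.le) hlt.le
    have h6 : Real.log (psum a t) ≤ 2 * (Real.exp (d * Real.log t) * Real.log t) := by
      linarith
    have hlFpos : 0 < Real.log (psum a t) := by
      have := Real.log_le_log (Real.exp_pos 1) hte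
      rw [Real.log_exp] at this; linarith
    have h7 : Real.log (Real.log (psum a t))
        ≤ Real.log 2 + (d * Real.log t + Real.log (Real.log t)) := by
      have hrhs : (0:ℝ) < Real.exp (d * Real.log t) * Real.log t := by positivity
      have := Real.log_le_log hlFpos h6
      rwa [Real.log_mul two_ne_zero hrhs.ne', Real.log_mul (Real.exp_pos _).ne' hlt.ne',
        Real.log_exp] at this
    have h8 : Real.log (Real.log (psum a t)) / Real.log t
        ≤ (Real.log 2 + Real.log (Real.log t)) / Real.log t + d := by
      calc Real.log (Real.log (psum a t)) / Real.log t
          ≤ (Real.log 2 + (d * Real.log t + Real.log (Real.log t))) / Real.log t :=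
            (div_le_div_iff_of_pos_right hlt).2 h7
        _ = ((Real.log 2 + Real.log (Real.log t)) + d * Real.log t) / Real.log t := by
            ring_nf
        _ = (Real.log 2 + Real.log (Real.log t)) / Real.log t + d * Real.log t / Real.log t :=
            add_div _ _ _
        _ = (Real.log 2 + Real.log (Real.log t)) / Real.log t + d := by
            rw [mul_div_assoc, div_self hlt.ne', mul_one]
    have hfin2 : Real.log (Real.log (psum a t)) / Real.log t ≤ c := (lt_of_le_of_lt h8 hgct).le
    exact_mod_cast hfin2
  exact le_antisymm hB hA
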